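/- For real b, the discriminant 𝒟_m(b) has no real roots; equivalently, for every real b the characteristic polynomial D_m(λ, b) has m+1 distinct roots. -/

import Mathlib

open Polynomial

noncomputable def Mmat (m : ℕ) (b : ℂ) : Matrix (Fin (m + 1)) (Fin (m + 1)) ℂ :=
  Matrix.of fun i j =>
    if (i : ℕ) = (j : ℕ) then (4 * ((i : ℕ) : ℂ) + 1) * b
    else if (i : ℕ) = (j : ℕ) + 1 then -((2 * ((i : ℕ) : ℂ) - 1) * (2 * ((i : ℕ) : ℂ)))
    else if (j : ℕ) = (i : ℕ) + 1 then 4 * ((i : ℕ) : ℂ) - 4 * (m : ℂ)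
    else 0

noncomputable def discD (m : ℕ) (b : ℂ) : ℂ :=
  (((Mmat m b).charpoly.roots).map fun r => ((Mmat m b).charpoly.derivative).eval r).prod

namespace Stmt9Aux

open Matrix

/-- charpoly is invariant under conjugation. -/
lemma charpoly_conj' {n : Type*} [DecidableEq n] [Fintype n] {R : Type*} [CommRing R]
    (P A Q : Matrix n n R) (hPQ : P * Q = 1) (hQP : Q * P = 1) :
    (P * A * Q).charpoly = A.charpoly := by
  have hc : charmatrix (P * A * Q) = P.map C * charmatrix A * Q.map C := by
    unfold charmatrix
    simp only [Matrix.mul_sub, Matrix.sub_mul, RingHom.mapMatrix_apply]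
    congr 1
    · rw [scalar_apply, Matrix.mul_assoc, ← Matrix.smul_eq_diagonal_mul, Matrix.mul_smul,
        ← Matrix.map_mul, hPQ, Matrix.map_one _ (map_zero C) (map_one C),
        Matrix.smul_eq_diagonal_mul, Matrix.mul_one]
    · simp [Matrix.map_mul, Matrix.mul_assoc]
  unfold Matrix.charpoly
  rw [hc, Matrix.det_mul, Matrix.det_mul, mul_comm, ← mul_assoc, ← Matrix.det_mul,
    ← Matrix.map_mul, hQP]
  simp

lemma charpoly_diag {n : Type*} [DecidableEq n] [Fintype n] {R : Type*} [CommRing R]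
    (v : n → R) : (Matrix.diagonal v).charpoly = ∏ i, (X - C (v i)) := by
  have : charmatrix (Matrix.diagonal v) = Matrix.diagonal fun i => X - C (v i) := by
    ext i j
    by_cases h : i = j
    · subst h; simp [charmatrix_apply_eq]
    · simp [charmatrix_apply_ne _ _ _ h, Matrix.diagonal_apply_ne _ h]
  rw [Matrix.charpoly, this, Matrix.det_diagonal]

/-- An eigenvector of `Mmat` whose first coordinate vanishes is zero. -/
lemma eig_zero (m : ℕ) (b μ : ℂ) (v : Fin (m+1) → ℂ)
    (hv : Mmat m b *ᵥ v = μ • v) (h0 : v 0 = 0) : v = 0 := by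
  have key : ∀ k, ∀ hk : k ≤ m, v ⟨k, by omega⟩ = 0 := by
    intro k
    induction k using Nat.strong_induction_on with
    | _ k IH =>
      intro hk
      match k, hk with
      | 0, _ => exact h0
      | (k+1), hk =>
        have hkm : k < m := by omega
        have hrow := congrFun hv ⟨k, by omega⟩
        simp only [Matrix.mulVec, dotProduct, Pi.smul_apply, smul_eq_mul] at hrow
        have hs : ∑ j, Mmat m b ⟨k, by omega⟩ j * v j
            = (4 * (k:ℂ) - 4 * m) * v ⟨k+1, by omega⟩ := by
          rw [Finset.sum_eq_single (⟨k+1, by omega⟩ : Fin (m+1))]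
          · congr 1
            simp only [Mmat, Matrix.of_apply, Fin.val_mk]
            rw [if_neg (by omega), if_neg (by omega), if_pos trivial]
          · intro j _ hj
            rcases lt_or_ge (j : ℕ) (k+1) with hjk | hjk
            · have : v j = 0 := by
                have := IH j.1 (by omega) (by omega)
                simpa using this
              rw [this, mul_zero]
            · have hjk2 : k + 2 ≤ (j : ℕ) := by
                rcases Nat.lt_or_ge (k+1) (j:ℕ) with h | h
                · omega
                · exfalso
                  exact hj (Fin.ext (by simp only [Fin.val_mk]; omega))
              have : Mmat m b ⟨k, by omega⟩ j = 0 := by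
                simp only [Mmat, Matrix.of_apply, Fin.val_mk]
                rw [if_neg (by omega), if_neg (by omega), if_neg (by omega)]
              rw [this, zero_mul]
          · intro h; exact absurd (Finset.mem_univ _) h
        have hvk : v ⟨k, by omega⟩ = 0 := IH k (by omega) (by omega)
        rw [hs, hvk, mul_zero] at hrow
        have hne : (4 * (k:ℂ) - 4 * m) ≠ 0 := by
          intro h
          have : ((k:ℂ)) = (m:ℂ) := by linear_combination h / 4
          exact absurd (Nat.cast_injective this) (by omega)
        exact (mul_eq_zero.mp hrow).resolve_left hne
  funext j
  have := key j.1 (by omega)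
  simpa using this

noncomputable def dseq (m : ℕ) : ℕ → ℝ
  | 0 => 1
  | (i+1) => dseq m i * Real.sqrt ((4*(m:ℝ) - 4*i) / ((2*i+1)*(2*i+2)))

lemma dseq_pos (m : ℕ) : ∀ i, i ≤ m → 0 < dseq m i := by
  intro i
  induction i with
  | zero => intro _; norm_num [dseq]
  | succ i IH =>
    intro h
    have hi : i < m := by omega
    have hnum : (0:ℝ) < 4*(m:ℝ) - 4*i := by
      have : (i:ℝ) + 1 ≤ m := by exact_mod_cast hi
      linarith
    have hden : (0:ℝ) < (2*(i:ℝ)+1)*(2*i+2) := by positivity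
    have := IH (by omega)
    have : 0 < Real.sqrt ((4*(m:ℝ) - 4*i) / ((2*i+1)*(2*i+2))) :=
      Real.sqrt_pos.mpr (div_pos hnum hden)
    rw [dseq]
    positivity

lemma dseq_key (m : ℕ) (i : ℕ) (hi : i < m) :
    (dseq m i)^2 * (4*(i:ℝ) - 4*m) = (dseq m (i+1))^2 * (-((2*(i:ℝ)+1)*(2*i+2))) := by
  have hnum : (0:ℝ) ≤ 4*(m:ℝ) - 4*i := by
    have : (i:ℝ) + 1 ≤ m := by exact_mod_cast hi
    linarith
  have hden : (0:ℝ) < (2*(i:ℝ)+1)*(2*i+2) := by positivity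
  rw [dseq, mul_pow, Real.sq_sqrt (div_nonneg hnum hden.le)]
  field_simp
  ring

/-- the real version of `Mmat`. -/
noncomputable def Mr (m : ℕ) (b : ℝ) : Matrix (Fin (m + 1)) (Fin (m + 1)) ℝ :=
  Matrix.of fun i j =>
    if (i : ℕ) = (j : ℕ) then (4 * ((i : ℕ) : ℝ) + 1) * b
    else if (i : ℕ) = (j : ℕ) + 1 then -((2 * ((i : ℕ) : ℝ) - 1) * (2 * ((i : ℕ) : ℝ)))
    else if (j : ℕ) = (i : ℕ) + 1 then 4 * ((i : ℕ) : ℝ) - 4 * (m : ℝ)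
    else 0

lemma Mmat_eq_map (m : ℕ) (b : ℝ) : Mmat m (b:ℂ) = (Mr m b).map Complex.ofReal := by
  ext i j
  simp only [Mmat, Mr, Matrix.map_apply, Matrix.of_apply]
  split_ifs <;> push_cast <;> ring

/-- the symmetrized real matrix. -/
noncomputable def Smat (m : ℕ) (b : ℝ) : Matrix (Fin (m + 1)) (Fin (m + 1)) ℝ :=
  Matrix.diagonal (fun i : Fin (m+1) => dseq m i) * Mr m b *
    Matrix.diagonal (fun i : Fin (m+1) => (dseq m i)⁻¹)

lemma Smat_apply (m : ℕ) (b : ℝ) (i j : Fin (m+1)) :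
    Smat m b i j = dseq m i * Mr m b i j * (dseq m j)⁻¹ := by
  rw [Smat, Matrix.mul_diagonal, Matrix.diagonal_mul]

lemma Smat_symm (m : ℕ) (b : ℝ) (i j : Fin (m+1)) : Smat m b j i = Smat m b i j := by
  have hdi := dseq_pos m i (by omega)
  have hdj := dseq_pos m j (by omega)
  rcases Nat.lt_trichotomy (i:ℕ) (j:ℕ) with h | h | h
  · rcases Nat.lt_or_ge (j:ℕ) ((i:ℕ)+2) with h2 | h2
    · -- j = i + 1
      have hj : (j:ℕ) = (i:ℕ)+1 := by omega
      have him : (i:ℕ) < m := by omega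
      rw [Smat_apply, Smat_apply]
      have hji : Mr m b j i = -((2*((i:ℕ):ℝ)+1)*(2*(i:ℕ)+2)) := by
        simp only [Mr, Matrix.of_apply]
        rw [if_neg (by omega), if_pos (by omega), hj]
        push_cast; ring
      have hij : Mr m b i j = 4*((i:ℕ):ℝ) - 4*m := by
        simp only [Mr, Matrix.of_apply]
        rw [if_neg (by omega), if_neg (by omega), if_pos (by omega)]
      rw [hji, hij, hj]
      have key := dseq_key m i him
      have h1 : dseq m (i:ℕ) ≠ 0 := hdi.ne'
      have h2 : dseq m ((i:ℕ)+1) ≠ 0 := (dseq_pos m _ (by omega)).ne'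
      field_simp
      nlinarith [key]
    · -- far apart : both zero
      have hji : Mr m b j i = 0 := by
        simp only [Mr, Matrix.of_apply]
        rw [if_neg (by omega), if_neg (by omega), if_neg (by omega)]
      have hij : Mr m b i j = 0 := by
        simp only [Mr, Matrix.of_apply]
        rw [if_neg (by omega), if_neg (by omega), if_neg (by omega)]
      rw [Smat_apply, Smat_apply, hji, hij]
      ring
  · have : i = j := Fin.ext h
    rw [this]
  · rcases Nat.lt_or_ge (i:ℕ) ((j:ℕ)+2) with h2 | h2
    · -- i = j + 1
      have hi : (i:ℕ) = (j:ℕ)+1 := by omega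
      have hjm : (j:ℕ) < m := by omega
      rw [Smat_apply, Smat_apply]
      have hij : Mr m b i j = -((2*((j:ℕ):ℝ)+1)*(2*(j:ℕ)+2)) := by
        simp only [Mr, Matrix.of_apply]
        rw [if_neg (by omega), if_pos (by omega), hi]
        push_cast; ring
      have hji : Mr m b j i = 4*((j:ℕ):ℝ) - 4*m := by
        simp only [Mr, Matrix.of_apply]
        rw [if_neg (by omega), if_neg (by omega), if_pos (by omega)]
      rw [hji, hij, hi]
      have key := dseq_key m j hjm
      have h1 : dseq m (j:ℕ) ≠ 0 := hdj.ne'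
      have h2 : dseq m ((j:ℕ)+1) ≠ 0 := (dseq_pos m _ (by omega)).ne'
      field_simp
      nlinarith [key]
    · have hji : Mr m b j i = 0 := by
        simp only [Mr, Matrix.of_apply]
        rw [if_neg (by omega), if_neg (by omega), if_neg (by omega)]
      have hij : Mr m b i j = 0 := by
        simp only [Mr, Matrix.of_apply]
        rw [if_neg (by omega), if_neg (by omega), if_neg (by omega)]
      rw [Smat_apply, Smat_apply, hji, hij]
      ring

lemma Amat_isHermitian (m : ℕ) (b : ℝ) :
    ((Smat m b).map Complex.ofReal).IsHermitian := by
  ext i j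
  simp only [Matrix.conjTranspose_apply, Matrix.map_apply, RCLike.star_def,
    Complex.conj_ofReal, Complex.ofReal_inj]
  exact Smat_symm m b i j

end Stmt9Aux


open Stmt9Aux Matrix

/-- for real b the discriminant 𝒟_m(b) does not vanish; equivalently,
D_m(λ,b) has m+1 distinct roots. -/
theorem stmt9 (m : ℕ) (b : ℝ) :
    discD m (b : ℂ) ≠ 0 ∧
    ((Mmat m (b : ℂ)).charpoly.roots).toFinset.card = m + 1 := by
  classical
  set M := Mmat m (b:ℂ) with hMdef
  set A : Matrix (Fin (m+1)) (Fin (m+1)) ℂ := (Smat m b).map Complex.ofReal with hAdef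
  have hA : A.IsHermitian := Amat_isHermitian m b
  set U : Matrix (Fin (m+1)) (Fin (m+1)) ℂ := (↑hA.eigenvectorUnitary : Matrix (Fin (m+1)) (Fin (m+1)) ℂ) with hUdef
  set ev : Fin (m+1) → ℂ := RCLike.ofReal ∘ hA.eigenvalues with hevdef
  have hU1 : U * star U = 1 := Matrix.mem_unitaryGroup_iff.mp hA.eigenvectorUnitary.2
  have hU2 : star U * U = 1 := Matrix.mem_unitaryGroup_iff'.mp hA.eigenvectorUnitary.2
  set Dc : Matrix (Fin (m+1)) (Fin (m+1)) ℂ :=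
    Matrix.diagonal (fun i : Fin (m+1) => ((dseq m i : ℝ) : ℂ)) with hDcdef
  set Ec : Matrix (Fin (m+1)) (Fin (m+1)) ℂ :=
    Matrix.diagonal (fun i : Fin (m+1) => (((dseq m i)⁻¹ : ℝ) : ℂ)) with hEcdef
  have hDE : Dc * Ec = 1 := by
    rw [hDcdef, hEcdef, Matrix.diagonal_mul_diagonal]
    have h : (fun i : Fin (m+1) => ((dseq m i : ℝ):ℂ) * (((dseq m i)⁻¹ : ℝ):ℂ))
        = fun _ => 1 := by
      funext i
      have h0 : dseq m i ≠ 0 := (dseq_pos m i (by omega)).ne'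
      rw [← Complex.ofReal_mul, mul_inv_cancel₀ h0, Complex.ofReal_one]
    rw [h, Matrix.diagonal_one]
  have hED : Ec * Dc = 1 := by
    rw [hEcdef, hDcdef, Matrix.diagonal_mul_diagonal]
    have h : (fun i : Fin (m+1) => (((dseq m i)⁻¹ : ℝ):ℂ) * ((dseq m i : ℝ):ℂ))
        = fun _ => 1 := by
      funext i
      have h0 : dseq m i ≠ 0 := (dseq_pos m i (by omega)).ne'
      rw [← Complex.ofReal_mul, inv_mul_cancel₀ h0, Complex.ofReal_one]
    rw [h, Matrix.diagonal_one]
  have hAeq : A = Dc * M * Ec := by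
    ext i j
    rw [hMdef, Mmat_eq_map m b]
    simp only [hAdef, hDcdef, hEcdef, Matrix.map_apply, Smat_apply,
      Matrix.mul_diagonal, Matrix.diagonal_mul]
    push_cast
    ring
  have hMeq : M = Ec * A * Dc := by
    rw [hAeq]
    simp only [Matrix.mul_assoc]
    rw [hED, Matrix.mul_one, ← Matrix.mul_assoc, hED, Matrix.one_mul]
  set P : Matrix (Fin (m+1)) (Fin (m+1)) ℂ := Ec * U with hPdef
  set Q : Matrix (Fin (m+1)) (Fin (m+1)) ℂ := star U * Dc with hQdef
  have hPQ : P * Q = 1 := by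
    rw [hPdef, hQdef, Matrix.mul_assoc, ← Matrix.mul_assoc U, hU1, Matrix.one_mul, hED]
  have hQP : Q * P = 1 := by
    rw [hQdef, hPdef, Matrix.mul_assoc, ← Matrix.mul_assoc Dc, hDE, Matrix.one_mul, hU2]
  have hM : M = P * Matrix.diagonal ev * Q := by
    rw [hMeq, hA.spectral_theorem, hPdef, hQdef]
    simp only [Unitary.conjStarAlgAut_apply, Matrix.mul_assoc]
    rfl
  have hcp : M.charpoly = ∏ i, (X - C (ev i)) := by
    rw [hM, charpoly_conj' _ _ _ hPQ hQP, charpoly_diag]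
  have hroots : M.charpoly.roots = Finset.univ.val.map ev := by
    have hmm : (Finset.univ.val.map ev).map (fun a => X - C a)
        = Finset.univ.val.map (fun i => X - C (ev i)) := by
      rw [Multiset.map_map]
      rfl
    rw [hcp, Finset.prod_eq_multiset_prod, ← hmm, Polynomial.roots_multiset_prod_X_sub_C]
  -- injectivity of ev via eigenvector argument
  have hMP : M * P = P * Matrix.diagonal ev := by
    rw [hM, Matrix.mul_assoc, Matrix.mul_assoc, hQP, Matrix.mul_one]
  have hdiag : ∀ i : Fin (m+1),
      Matrix.diagonal ev *ᵥ Pi.single i 1 = ev i • (Pi.single i 1 : Fin (m+1) → ℂ) := by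
    intro i
    rw [Matrix.diagonal_mulVec_single]
    funext k
    rcases eq_or_ne k i with rfl | hk
    · simp
    · simp [Pi.single_apply, hk]
  have heig : ∀ i : Fin (m+1), M *ᵥ (P *ᵥ Pi.single i 1) = ev i • (P *ᵥ Pi.single i 1) := by
    intro i
    rw [Matrix.mulVec_mulVec, hMP, ← Matrix.mulVec_mulVec, hdiag, Matrix.mulVec_smul]
  have hQPv : ∀ x : Fin (m+1) → ℂ, Q *ᵥ (P *ᵥ x) = x := by
    intro x
    rw [Matrix.mulVec_mulVec, hQP, Matrix.one_mulVec]
  have hinj : Function.Injective ev := by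
    intro i j hij
    by_contra hne
    set vi : Fin (m+1) → ℂ := P *ᵥ Pi.single i 1 with hvidef
    set vj : Fin (m+1) → ℂ := P *ᵥ Pi.single j 1 with hvjdef
    have hu : M *ᵥ (vj 0 • vi - vi 0 • vj) = ev i • (vj 0 • vi - vi 0 • vj) := by
      rw [Matrix.mulVec_sub, Matrix.mulVec_smul, Matrix.mulVec_smul, heig i, heig j, ← hij,
        smul_sub, smul_comm (vj 0), smul_comm (vi 0)]
    have hu0 : (vj 0 • vi - vi 0 • vj) 0 = 0 := by
      simp [mul_comm]
    have hzero := eig_zero m (b:ℂ) (ev i) _ hu hu0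
    have hw : vj 0 • (Pi.single i 1 : Fin (m+1) → ℂ) - vi 0 • (Pi.single j 1 : Fin (m+1) → ℂ) = 0 := by
      have h2 := congrArg (fun x => Q *ᵥ x) hzero
      simp only [Matrix.mulVec_sub, Matrix.mulVec_smul, Matrix.mulVec_zero] at h2
      rw [hvidef, hvjdef, hQPv, hQPv] at h2
      exact h2
    have hvj0 : vj 0 = 0 := by
      have := congrFun hw i
      simpa [Pi.single_apply, Ne.symm hne] using this
    have hvi0 : vi 0 = 0 := by
      have := congrFun hw j
      simpa [Pi.single_apply, hne] using this
    have hvi : vi = 0 := eig_zero m (b:ℂ) (ev i) vi (heig i) hvi0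
    have : (Pi.single i 1 : Fin (m+1) → ℂ) = 0 := by
      rw [← hQPv (Pi.single i 1), ← hvidef, hvi, Matrix.mulVec_zero]
    have h3 : (1:ℂ) = 0 := by simpa using congrFun this i
    exact one_ne_zero h3
  have hnodup : M.charpoly.roots.Nodup := by
    rw [hroots]
    exact Finset.univ.nodup.map hinj
  constructor
  · -- discriminant nonzero
    have hsep : M.charpoly.Separable := by
      rw [hcp]
      exact (Polynomial.separable_prod_X_sub_C_iff).mpr hinj
    obtain ⟨p, q, hpq⟩ := hsep
    show ((M.charpoly.roots).map fun r => (M.charpoly.derivative).eval r).prod ≠ 0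
    apply Multiset.prod_ne_zero
    intro hmem
    obtain ⟨r, hr, hr0⟩ := Multiset.mem_map.mp hmem
    have hroot : M.charpoly.eval r = 0 :=
      (Polynomial.mem_roots M.charpoly_monic.ne_zero).mp hr
    have h1 := congrArg (Polynomial.eval r) hpq
    simp only [Polynomial.eval_add, Polynomial.eval_mul, Polynomial.eval_one] at h1
    rw [hroot, mul_zero, zero_add, hr0, mul_zero] at h1
    exact zero_ne_one h1
  · rw [Multiset.toFinset_card_eq_card_iff_nodup.mpr hnodup, hroots, Multiset.card_map]
    simp
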